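/- Let L : C → D and R : D → C be an adjoint pair of functors (L ⊣ R) where R is fully faithful, exhibiting D as a reflective subcategory of C via the class S of morphisms inverted by L. Then for any category E, precomposition with L induces a fully faithful functor from left-adjoint functors D → E to left-adjoint functors C → E, whose essential image consists exactly of those left adjoints C → E sending every morphism of S to an isomorphism. -/

import Mathlib

open CategoryTheory

universe v₁ v₂ v₃ u₁ u₂ u₃

variable {C : Type u₁} [Category.{v₁} C] {D : Type u₂} [Category.{v₂} D]
  {E : Type u₃} [Category.{v₃} E]

/-- The functor induced by precomposition with `L` between the full subcategories of
left-adjoint functors `D ⥤ E` and `C ⥤ E`. -/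
noncomputable def precompLeftAdjoints (L : C ⥤ D) (R : D ⥤ C) (adj : L ⊣ R) :
    ObjectProperty.FullSubcategory (fun F : D ⥤ E => F.IsLeftAdjoint) ⥤
      ObjectProperty.FullSubcategory (fun F : C ⥤ E => F.IsLeftAdjoint) :=
  ObjectProperty.lift _
    (ObjectProperty.ι _ ⋙ (Functor.whiskeringLeft C D E).obj L)
    (fun F => by
      haveI : L.IsLeftAdjoint := ⟨R, ⟨adj⟩⟩
      haveI : F.obj.IsLeftAdjoint := F.property
      exact Functor.isLeftAdjoint_comp L F.obj)

/-- Let `L ⊣ R` be a reflective localization (`R` fully faithful) and `S` the class of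
morphisms inverted by `L`. Precomposition with `L` induces a fully faithful functor from
left-adjoint functors `D ⥤ E` to left-adjoint functors `C ⥤ E`, whose essential image
consists exactly of the left adjoints `C ⥤ E` sending every morphism of `S` to an
isomorphism. -/
theorem stmt10 (L : C ⥤ D) (R : D ⥤ C) (adj : L ⊣ R) [R.Full] [R.Faithful] :
    (precompLeftAdjoints (E := E) L R adj).Full ∧
    (precompLeftAdjoints (E := E) L R adj).Faithful ∧
    (∀ G : ObjectProperty.FullSubcategory (fun F : C ⥤ E => F.IsLeftAdjoint),
      (∃ F, Nonempty ((precompLeftAdjoints (E := E) L R adj).obj F ≅ G)) ↔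
        ∀ ⦃a b : C⦄ (f : a ⟶ b), IsIso (L.map f) → IsIso (G.obj.map f)) := by
  set W := (MorphismProperty.isomorphisms D).inverseImage L with hW
  haveI hloc : L.IsLocalization W := adj.isLocalization
  haveI : ((Functor.whiskeringLeft C D E).obj L).Full := Localization.full_whiskeringLeft L W E
  haveI : ((Functor.whiskeringLeft C D E).obj L).Faithful := Localization.faithful_whiskeringLeft L W E
  haveI h1 : (ObjectProperty.ι (fun F : D ⥤ E => F.IsLeftAdjoint) ⋙
      (Functor.whiskeringLeft C D E).obj L).Full := Functor.Full.comp _ _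
  haveI h2 : (ObjectProperty.ι (fun F : D ⥤ E => F.IsLeftAdjoint) ⋙
      (Functor.whiskeringLeft C D E).obj L).Faithful := Functor.Faithful.comp _ _
  refine ⟨inferInstanceAs (ObjectProperty.lift _ _ _).Full,
    inferInstanceAs (ObjectProperty.lift _ _ _).Faithful, fun G => ?_⟩
  constructor
  · rintro ⟨F, ⟨e⟩⟩ a b f hf
    have e' : L ⋙ F.obj ≅ G.obj := (ObjectProperty.ι _).mapIso e
    have : IsIso ((L ⋙ F.obj).map f) := by
      dsimp; exact inferInstance
    exact ((MorphismProperty.isomorphisms E).arrow_mk_iso_iff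
      (Arrow.isoMk (e'.app a) (e'.app b) (e'.hom.naturality f).symm)).1 this
  · intro h
    have hG : W.IsInvertedBy G.obj := fun a b f hf => h f hf
    let F₀ := Localization.lift G.obj hG L
    have fac : L ⋙ F₀ ≅ G.obj := Localization.fac G.obj hG L
    obtain ⟨G', ⟨adj2⟩⟩ := G.property
    haveI : (𝟭 E).IsLocalization (MorphismProperty.isomorphisms E) :=
      Functor.IsLocalization.for_id _ le_rfl
    haveI sq1 : CatCommSq G.obj L (𝟭 E) F₀ := ⟨G.obj.rightUnitor ≪≫ fac.symm⟩
    haveI sq2 : CatCommSq G' (𝟭 E) L (G' ⋙ L) := ⟨(G' ⋙ L).leftUnitor.symm⟩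
    have adj3 := adj2.localization L W (𝟭 E) (MorphismProperty.isomorphisms E) F₀ (G' ⋙ L)
    refine ⟨⟨F₀, ⟨_, ⟨adj3⟩⟩⟩, ⟨(ObjectProperty.ι _).preimageIso fac⟩⟩
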